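/- Let A be a strongly connected synchronizing n-state automaton and α the steady-state distribution of S = Σ_a p(a)[a] for some positive probability vector p. If at least n − c of the components of α are equal (for some c > 0), then 𝔠(A) ≤ 2^c (n−c+1)(n−1). -/

import Mathlib

open Matrix

/-- The 0-1 transition matrix of a letter: `(p,q)`-entry is 1 iff `δ q a = p`. -/
def letterMat {n k : ℕ} (δ : Fin n → Fin k → Fin n) (a : Fin k) :
    Matrix (Fin n) (Fin n) ℝ :=
  fun p q => if δ q a = p then 1 else 0

/-- The matrix of a word, satisfying `[u][K] = [K·u]`. -/
def wordMat {n k : ℕ} (δ : Fin n → Fin k → Fin n) (w : List (Fin k)) :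
    Matrix (Fin n) (Fin n) ℝ :=
  (w.reverse.map (letterMat δ)).prod

/-- The action of a word on a state. -/
def act {n k : ℕ} (δ : Fin n → Fin k → Fin n) (w : List (Fin k)) (q : Fin n) : Fin n :=
  w.foldl δ q

/-- A word is a reset word if it maps all states to one state. -/
def IsReset {n k : ℕ} (δ : Fin n → Fin k → Fin n) (w : List (Fin k)) : Prop :=
  ∀ p q : Fin n, act δ w p = act δ w q

namespace Stmt10Aux

open Finset

variable {n k : ℕ}

/-- preimage of a set under the action of a word -/
def preim (δ : Fin n → Fin k → Fin n) (w : List (Fin k)) (K : Finset (Fin n)) :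
    Finset (Fin n) :=
  Finset.univ.filter (fun q => act δ w q ∈ K)

/-- weight of a set -/
def wA (α : Fin n → ℝ) (K : Finset (Fin n)) : ℝ := ∑ i ∈ K, α i

lemma act_append (δ : Fin n → Fin k → Fin n) (u v : List (Fin k)) (q : Fin n) :
    act δ (u ++ v) q = act δ v (act δ u q) := by
  simp [act, List.foldl_append]

lemma mem_preim {δ : Fin n → Fin k → Fin n} {w : List (Fin k)} {K : Finset (Fin n)}
    {q : Fin n} : q ∈ preim δ w K ↔ act δ w q ∈ K := by simp [preim]

lemma preim_nil (δ : Fin n → Fin k → Fin n) (K : Finset (Fin n)) : preim δ [] K = K := by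
  ext q; rw [mem_preim]; rfl

lemma preim_cons (δ : Fin n → Fin k → Fin n) (b : Fin k) (u : List (Fin k))
    (K : Finset (Fin n)) : preim δ (b :: u) K = preim δ [b] (preim δ u K) := by
  ext q; rw [mem_preim, mem_preim, mem_preim]; rfl

lemma wA_pos {α : Fin n → ℝ} (hαpos : ∀ i, 0 < α i) {K : Finset (Fin n)}
    (hK : K.Nonempty) : 0 < wA α K :=
  Finset.sum_pos (fun i _ => hαpos i) hK

/-- one-step stationarity -/
lemma step_lemma (δ : Fin n → Fin k → Fin n) (p : Fin k → ℝ) (α : Fin n → ℝ)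
    (hαeig : (∑ a, p a • letterMat δ a).mulVec α = α) (L : Finset (Fin n)) :
    ∑ a, p a * wA α (preim δ [a] L) = wA α L := by
  symm
  have hpt : ∀ i, α i = ∑ q, ∑ a, p a * ((if δ q a = i then (1:ℝ) else 0) * α q) := by
    intro i
    conv_lhs => rw [← hαeig]
    simp [Matrix.mulVec, dotProduct, letterMat, Matrix.sum_apply, Pi.smul_apply,
      smul_eq_mul, Finset.sum_mul, mul_assoc]
  calc wA α L = ∑ i ∈ L, α i := rfl
    _ = ∑ i ∈ L, ∑ q, ∑ a, p a * ((if δ q a = i then (1:ℝ) else 0) * α q) :=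
        Finset.sum_congr rfl (fun i _ => hpt i)
    _ = ∑ q, ∑ i ∈ L, ∑ a, p a * ((if δ q a = i then (1:ℝ) else 0) * α q) :=
        Finset.sum_comm
    _ = ∑ q, ∑ a, ∑ i ∈ L, p a * ((if δ q a = i then (1:ℝ) else 0) * α q) := by
        exact Finset.sum_congr rfl (fun q _ => Finset.sum_comm)
    _ = ∑ q, ∑ a, p a * ((if δ q a ∈ L then (1:ℝ) else 0) * α q) := by
        refine Finset.sum_congr rfl (fun q _ => Finset.sum_congr rfl (fun a _ => ?_))
        rw [← Finset.mul_sum, ← Finset.sum_mul]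
        rw [Finset.sum_ite_eq L (δ q a) (fun _ => (1:ℝ))]
    _ = ∑ a, ∑ q, p a * ((if δ q a ∈ L then (1:ℝ) else 0) * α q) := Finset.sum_comm
    _ = ∑ a, p a * wA α (preim δ [a] L) := by
        refine Finset.sum_congr rfl (fun a _ => ?_)
        rw [← Finset.mul_sum]
        congr 1
        rw [wA, preim]
        rw [Finset.sum_filter]
        refine Finset.sum_congr rfl (fun q _ => ?_)
        have : act δ [a] q = δ q a := rfl
        rw [this]
        by_cases h : δ q a ∈ L <;> simp [h]

/-- equalization -/
lemma equalize (δ : Fin n → Fin k → Fin n) (p : Fin k → ℝ) (α : Fin n → ℝ)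
    (hp : ∀ a, 0 < p a) (hp1 : ∑ a, p a = 1)
    (hαeig : (∑ a, p a • letterMat δ a).mulVec α = α)
    (N : ℕ) (K : Finset (Fin n))
    (hle : ∀ w : List (Fin k), w.length ≤ N → wA α (preim δ w K) ≤ wA α K) :
    ∀ w : List (Fin k), w.length ≤ N → wA α (preim δ w K) = wA α K := by
  intro w
  induction w with
  | nil => intro _; rw [preim_nil]
  | cons b u ih =>
    intro hlen
    have hu : u.length ≤ N := by simp at hlen ⊢; omega
    have hU := ih hu
    have hstep := step_lemma δ p α hαeig (preim δ u K)
    have hsum0 : ∑ a, p a * (wA α K - wA α (preim δ (a :: u) K)) = 0 := by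
      have e1 : ∀ a : Fin k, p a * (wA α K - wA α (preim δ (a :: u) K))
          = p a * wA α K - p a * wA α (preim δ [a] (preim δ u K)) := by
        intro a; rw [mul_sub, preim_cons]
      rw [Finset.sum_congr rfl (fun a _ => e1 a), Finset.sum_sub_distrib,
        ← Finset.sum_mul, hp1, hstep, hU, one_mul, sub_self]
    have hnn : ∀ a ∈ Finset.univ, (0:ℝ) ≤ p a * (wA α K - wA α (preim δ (a :: u) K)) := by
      intro a _
      have hlen' : (a :: u).length ≤ N := by simp at hlen ⊢; omega
      exact mul_nonneg (le_of_lt (hp a)) (sub_nonneg.2 (hle _ hlen'))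
    have h0 := (Finset.sum_eq_zero_iff_of_nonneg hnn).1 hsum0 b (Finset.mem_univ b)
    have hpb := hp b
    have : wA α K - wA α (preim δ (b :: u) K) = 0 := by
      rcases mul_eq_zero.1 h0 with h | h
      · exact absurd h (ne_of_gt hpb)
      · exact h
    linarith

/-- pushforward of α by word w -/
noncomputable def nu (δ : Fin n → Fin k → Fin n) (α : Fin n → ℝ) (w : List (Fin k)) :
    Fin n → ℝ :=
  fun q => ∑ s, if act δ w s = q then α s else 0

lemma nu_nil (δ : Fin n → Fin k → Fin n) (α : Fin n → ℝ) : nu δ α [] = α := by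
  funext q
  show (∑ s, if act δ [] s = q then α s else 0) = α q
  rw [Finset.sum_eq_single (f := fun s => if act δ [] s = q then α s else 0) q
    (fun b _ hb => if_neg hb) (by simp)]
  exact if_pos rfl

/-- linear pushforward by one letter -/
noncomputable def Lb (δ : Fin n → Fin k → Fin n) (b : Fin k) :
    (Fin n → ℝ) →ₗ[ℝ] (Fin n → ℝ) where
  toFun x := fun q => ∑ s, if δ s b = q then x s else 0
  map_add' x y := by
    funext q
    simp only [Pi.add_apply]
    rw [show (∑ s, if δ s b = q then x s + y s else 0)
      = ∑ s, ((if δ s b = q then x s else 0) + (if δ s b = q then y s else 0)) from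
      Finset.sum_congr rfl (fun s _ => by by_cases h : δ s b = q <;> simp [h]),
      Finset.sum_add_distrib]
  map_smul' c x := by
    funext q
    simp only [Pi.smul_apply, smul_eq_mul, RingHom.id_apply]
    rw [Finset.mul_sum]
    refine Finset.sum_congr rfl (fun s _ => ?_)
    by_cases h : δ s b = q <;> simp [h]

lemma nu_append (δ : Fin n → Fin k → Fin n) (α : Fin n → ℝ) (w : List (Fin k)) (b : Fin k) :
    nu δ α (w ++ [b]) = Lb δ b (nu δ α w) := by
  funext q
  show (∑ s, if act δ (w ++ [b]) s = q then α s else 0)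
      = ∑ s', if δ s' b = q then nu δ α w s' else 0
  have h1 : ∀ s' : Fin n, (if δ s' b = q then nu δ α w s' else 0)
      = ∑ s, if act δ w s = s' then (if δ s' b = q then α s else 0) else 0 := by
    intro s'
    by_cases h : δ s' b = q
    · simp only [h, if_true, nu]
    · simp only [h, if_false]
      exact (Finset.sum_eq_zero (fun s _ => by by_cases h2 : act δ w s = s' <;> simp [h2])).symm
  rw [Finset.sum_congr rfl (fun s' _ => h1 s'), Finset.sum_comm]
  refine Finset.sum_congr rfl (fun s _ => ?_)
  rw [Finset.sum_ite_eq Finset.univ (act δ w s) (fun s' => if δ s' b = q then α s else 0)]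
  simp only [Finset.mem_univ, if_true]
  have : act δ (w ++ [b]) s = δ (act δ w s) b := by simp [act, List.foldl_append]
  rw [this]

/-- Krylov chain of spans -/
noncomputable def Yj (δ : Fin n → Fin k → Fin n) (α : Fin n → ℝ) (j : ℕ) :
    Submodule ℝ (Fin n → ℝ) :=
  Submodule.span ℝ {x | ∃ w : List (Fin k), w.length ≤ j ∧ nu δ α w = x}

lemma Yj_mono (δ : Fin n → Fin k → Fin n) (α : Fin n → ℝ) {j j' : ℕ} (h : j ≤ j') :
    Yj δ α j ≤ Yj δ α j' :=
  Submodule.span_mono (fun x ⟨w, hw, he⟩ => ⟨w, le_trans hw h, he⟩)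

lemma all_nu_mem (δ : Fin n → Fin k → Fin n) (α : Fin n → ℝ) (j : ℕ)
    (hst : Yj δ α (j + 1) ≤ Yj δ α j) : ∀ w : List (Fin k), nu δ α w ∈ Yj δ α j := by
  intro w
  induction w using List.reverseRecOn with
  | nil => exact Submodule.subset_span ⟨[], Nat.zero_le j, rfl⟩
  | append_singleton u b ih =>
    rw [nu_append]
    have hmap : (Yj δ α j).map (Lb δ b) ≤ Yj δ α (j + 1) := by
      rw [Yj, Submodule.map_span]
      apply Submodule.span_le.2
      rintro x ⟨y, ⟨w', hw', rfl⟩, rfl⟩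
      exact Submodule.subset_span
        ⟨w' ++ [b], by simpa using Nat.add_le_add_right hw' 1, nu_append δ α w' b⟩
    exact hst (hmap ⟨nu δ α u, ih, rfl⟩)

lemma exists_stable (δ : Fin n → Fin k → Fin n) (α : Fin n → ℝ)
    (hα0 : α ≠ 0) : ∃ j, j ≤ n - 1 ∧ Yj δ α (j + 1) ≤ Yj δ α j := by
  by_contra hcon
  push_neg at hcon
  have hlt : ∀ j, j ≤ n - 1 → Yj δ α j < Yj δ α (j + 1) := by
    intro j hj
    exact lt_of_le_of_ne (Yj_mono δ α (Nat.le_succ j))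
      (fun he => (hcon j hj) (le_of_eq he.symm))
  have h0 : 1 ≤ Module.finrank ℝ (Yj δ α 0) := by
    by_contra h
    have h' : Module.finrank ℝ (Yj δ α 0) = 0 := by omega
    rw [Submodule.finrank_eq_zero] at h'
    have hm : α ∈ Yj δ α 0 := Submodule.subset_span ⟨[], le_refl 0, nu_nil δ α⟩
    rw [h'] at hm
    exact hα0 (Submodule.mem_bot ℝ |>.1 hm)
  have hn1 : 1 ≤ n := by
    by_contra h
    have : n = 0 := by omega
    subst this
    exact hα0 (funext (fun i => absurd i.2 (by omega)))
  have hrank : ∀ j, j ≤ n → j + 1 ≤ Module.finrank ℝ (Yj δ α j) := by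
    intro j
    induction j with
    | zero => intro _; exact h0
    | succ i ih =>
      intro hi
      have h1 := ih (by omega)
      have h2 := Submodule.finrank_lt_finrank_of_lt (hlt i (by omega))
      omega
  have hfull := hrank n (le_refl n)
  have hle := Submodule.finrank_le (Yj δ α n)
  rw [Module.finrank_pi ℝ, Fintype.card_fin] at hle
  omega

/-- The extension lemma: weight can be strictly increased by a word of length ≤ n-1. -/
lemma extend (δ : Fin n → Fin k → Fin n) (p : Fin k → ℝ) (α : Fin n → ℝ)
    (hsc : ∀ s q : Fin n, ∃ w : List (Fin k), act δ w s = q)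
    (hsync : ∃ w, IsReset δ w)
    (hp : ∀ a, 0 < p a) (hp1 : ∑ a, p a = 1)
    (hαpos : ∀ i, 0 < α i) (hα1 : ∑ i, α i = 1)
    (hαeig : (∑ a, p a • letterMat δ a).mulVec α = α)
    (K : Finset (Fin n)) (hK : K.Nonempty) (hKne : K ≠ Finset.univ) :
    ∃ w : List (Fin k), w.length ≤ n - 1 ∧ wA α K < wA α (preim δ w K) := by
  classical
  by_contra hcon
  push_neg at hcon
  have hle : ∀ w : List (Fin k), w.length ≤ n - 1 → wA α (preim δ w K) ≤ wA α K := by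
    intro w hw
    rcases hcon w hw with h
    exact h
  have hall := equalize δ p α hp hp1 hαeig (n - 1) K hle
  have hα0 : α ≠ 0 := by
    intro h
    obtain ⟨q0, hq0⟩ := hK
    have := hαpos q0
    rw [h] at this
    simp at this
  obtain ⟨j, hj, hst⟩ := exists_stable δ α hα0
  have hmem := all_nu_mem δ α j hst
  -- the functional
  set t := wA α K with ht
  let g : Fin n → ℝ := fun q => (if q ∈ K then (1:ℝ) else 0) - t
  let ℓ : (Fin n → ℝ) →ₗ[ℝ] ℝ :=
    { toFun := fun x => ∑ q, x q * g q
      map_add' := by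
        intro x y
        simp only [Pi.add_apply, add_mul]
        rw [Finset.sum_add_distrib]
      map_smul' := by
        intro cc x
        simp only [Pi.smul_apply, smul_eq_mul, RingHom.id_apply, mul_assoc]
        rw [Finset.mul_sum] }
  -- value of ℓ on nu w
  have hval : ∀ w : List (Fin k), ℓ (nu δ α w) = wA α (preim δ w K) - t := by
    intro w
    show (∑ q, nu δ α w q * g q) = wA α (preim δ w K) - t
    have h1 : ∀ q : Fin n, nu δ α w q * g q
        = ∑ s, if act δ w s = q then α s * g q else 0 := by
      intro q
      rw [nu, Finset.sum_mul]
      refine Finset.sum_congr rfl (fun s _ => ?_)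
      by_cases h : act δ w s = q <;> simp [h]
    rw [Finset.sum_congr rfl (fun q _ => h1 q), Finset.sum_comm]
    have h2 : ∀ s : Fin n, (∑ q, if act δ w s = q then α s * g q else 0)
        = α s * g (act δ w s) := by
      intro s
      rw [Finset.sum_ite_eq Finset.univ (act δ w s) (fun q => α s * g q)]
      simp
    rw [Finset.sum_congr rfl (fun s _ => h2 s)]
    have h3 : ∀ s : Fin n, α s * g (act δ w s)
        = (if act δ w s ∈ K then α s else 0) - α s * t := by
      intro s
      show α s * ((if act δ w s ∈ K then (1:ℝ) else 0) - t) = _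
      by_cases h : act δ w s ∈ K <;> simp [h] <;> ring
    rw [Finset.sum_congr rfl (fun s _ => h3 s), Finset.sum_sub_distrib]
    congr 1
    · rw [wA, preim, Finset.sum_filter]
    · rw [← Finset.sum_mul, hα1, one_mul]
  -- generators of Yj j are in ker ℓ
  have hker : Yj δ α j ≤ LinearMap.ker ℓ := by
    rw [Yj]
    apply Submodule.span_le.2
    rintro x ⟨w, hw, rfl⟩
    rw [SetLike.mem_coe, LinearMap.mem_ker, hval w, hall w (le_trans hw hj), sub_self]
  -- Dirac measures are nu-vectors
  obtain ⟨w₀, hw₀⟩ := hsync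
  obtain ⟨q0, hq0⟩ := hK
  have hf : ∀ qq : Fin n, ∃ w : List (Fin k),
      nu δ α w = fun q' => if qq = q' then (1:ℝ) else 0 := by
    intro qq
    obtain ⟨u, hu⟩ := hsc (act δ w₀ q0) qq
    refine ⟨w₀ ++ u, ?_⟩
    funext q'
    have hact : ∀ s : Fin n, act δ (w₀ ++ u) s = qq := by
      intro s
      rw [act_append]
      rw [hw₀ s q0]
      exact hu
    show (∑ s, if act δ (w₀ ++ u) s = q' then α s else 0) = _
    by_cases h : qq = q'
    · subst h
      rw [← hα1]
      simp only [if_pos rfl]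
      refine Finset.sum_congr rfl (fun s _ => ?_)
      rw [if_pos (hact s)]
    · rw [if_neg h]
      refine Finset.sum_eq_zero (fun s _ => ?_)
      rw [hact s, if_neg h]
  -- evaluate ℓ at Dirac measures
  have hdirac : ∀ qq : Fin n, g qq = 0 := by
    intro qq
    obtain ⟨w, hw⟩ := hf qq
    have hm : nu δ α w ∈ LinearMap.ker ℓ := hker (hmem w)
    rw [LinearMap.mem_ker] at hm
    have : ℓ (nu δ α w) = g qq := by
      rw [hw]
      show (∑ q, (if qq = q then (1:ℝ) else 0) * g q) = g qq
      have : ∀ q : Fin n, (if qq = q then (1:ℝ) else 0) * g q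
          = if qq = q then g q else 0 := by
        intro q; by_cases h : qq = q <;> simp [h]
      rw [Finset.sum_congr rfl (fun q _ => this q),
        Finset.sum_ite_eq Finset.univ qq g]
      simp
    rw [hm] at this
    exact this.symm
  -- contradiction
  obtain ⟨q1, hq1⟩ : ∃ q, q ∉ K := by
    by_contra h
    push_neg at h
    exact hKne (Finset.eq_univ_iff_forall.2 h)
  have h1 : (1:ℝ) - t = 0 := by
    have := hdirac q0
    simpa [g, hq0] using this
  have h2 : (0:ℝ) - t = 0 := by
    have := hdirac q1
    simpa [g, hq1] using this
  have : (0:ℝ) = 1 := by linarith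
  norm_num at this

end Stmt10Aux

namespace Stmt10Aux

open Finset

variable {n k : ℕ}

noncomputable def Vset (α : Fin n → ℝ) : Finset ℝ := by
  classical
  exact Finset.image (fun K : Finset (Fin n) => wA α K) (Finset.univ : Finset (Finset (Fin n)))

lemma nat_helper (d m : ℕ) : m + d + 1 ≤ 2 ^ d * (m + 1) := by
  induction d with
  | zero => simp
  | succ d ih =>
    have h2 : 2 * (m + d + 1) ≤ 2 * (2 ^ d * (m + 1)) := by omega
    have h3 : 2 * (2 ^ d * (m + 1)) = 2 ^ (d + 1) * (m + 1) := by ring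
    omega

lemma pow_count {c : ℕ} (t : ℕ) (htn : t ≤ n) (hT : n - c ≤ t) :
    2 ^ (n - t) * (t + 1) ≤ 2 ^ c * (n - c + 1) := by
  by_cases h : c ≤ n
  · have he : n - t ≤ c := by omega
    set d := c - (n - t) with hd
    have ht' : t + 1 = (n - c) + d + 1 := by omega
    rw [ht']
    calc 2 ^ (n - t) * ((n - c) + d + 1) ≤ 2 ^ (n - t) * (2 ^ d * ((n - c) + 1)) :=
          Nat.mul_le_mul_left _ (nat_helper d (n - c))
      _ = 2 ^ ((n - t) + d) * ((n - c) + 1) := by rw [pow_add]; ring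
      _ = 2 ^ c * (n - c + 1) := by congr 2; omega
  · have hnc : n - c = 0 := by omega
    rw [hnc]
    have h1 : t + 1 ≤ 2 ^ t := Nat.lt_two_pow_self
    calc 2 ^ (n - t) * (t + 1) ≤ 2 ^ (n - t) * 2 ^ t := Nat.mul_le_mul_left _ h1
      _ = 2 ^ (n - t + t) := (pow_add 2 _ _).symm
      _ ≤ 2 ^ c := Nat.pow_le_pow_right (by omega) (by omega)
      _ = 2 ^ c * (0 + 1) := by ring

lemma card_V {c : ℕ} (α : Fin n → ℝ) (T : Finset (Fin n)) (hT : n - c ≤ T.card)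
    (hTeq : ∀ i ∈ T, ∀ j ∈ T, α i = α j) :
    (Vset α).card ≤ 2 ^ c * (n - c + 1) := by
  classical
  set β : ℝ := if h : T.Nonempty then α h.choose else 0 with hβdef
  have hβ : ∀ i ∈ T, α i = β := by
    intro i hi
    have hne : T.Nonempty := ⟨i, hi⟩
    rw [hβdef, dif_pos hne]
    exact hTeq i hi _ hne.choose_spec
  set F : Finset (Fin n) × ℕ → ℝ := fun s => (∑ i ∈ s.1, α i) + s.2 * β with hF
  set gmap : Finset (Fin n) → Finset (Fin n) × ℕ := fun M => (M \ T, (M ∩ T).card) with hg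
  have hfac : ∀ M : Finset (Fin n), wA α M = F (gmap M) := by
    intro M
    rw [wA, hF, hg]
    simp only
    rw [← Finset.sum_inter_add_sum_sdiff M T α]
    have : ∑ i ∈ M ∩ T, α i = (M ∩ T).card * β := by
      rw [Finset.sum_congr rfl (fun i hi => hβ i (Finset.mem_of_mem_inter_right hi))]
      rw [Finset.sum_const, nsmul_eq_mul]
    rw [this]
    ring
  have himg : Vset α = Finset.image F (Finset.image gmap Finset.univ) := by
    rw [Vset, Finset.image_image]
    exact Finset.image_congr (fun M _ => hfac M)
  have hsub : Finset.image gmap Finset.univ ⊆ Tᶜ.powerset ×ˢ Finset.range (T.card + 1) := by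
    intro x hx
    rw [Finset.mem_image] at hx
    obtain ⟨M, _, rfl⟩ := hx
    rw [Finset.mem_product]
    constructor
    · rw [Finset.mem_powerset]
      intro y hy
      rw [hg] at hy
      simp only at hy
      rw [Finset.mem_sdiff] at hy
      rw [Finset.mem_compl]
      exact hy.2
    · rw [Finset.mem_range]
      show (M ∩ T).card < T.card + 1
      have := Finset.card_le_card (Finset.inter_subset_right (s₁ := M) (s₂ := T))
      omega
  calc (Vset α).card ≤ (Finset.image gmap Finset.univ).card := by
        rw [himg]; exact Finset.card_image_le
    _ ≤ (Tᶜ.powerset ×ˢ Finset.range (T.card + 1)).card := Finset.card_le_card hsub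
    _ = 2 ^ (Tᶜ.card) * (T.card + 1) := by
        rw [Finset.card_product, Finset.card_powerset, Finset.card_range]
    _ = 2 ^ (n - T.card) * (T.card + 1) := by
        rw [Finset.card_compl, Fintype.card_fin]
    _ ≤ 2 ^ c * (n - c + 1) := pow_count T.card (by
        have := Finset.card_le_card (Finset.subset_univ T)
        simpa using this) hT

/-- The chain construction. -/
lemma chain (δ : Fin n → Fin k → Fin n) (p : Fin k → ℝ) (α : Fin n → ℝ)
    (hsc : ∀ s q : Fin n, ∃ w : List (Fin k), act δ w s = q)
    (hsync : ∃ w, IsReset δ w)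
    (hp : ∀ a, 0 < p a) (hp1 : ∑ a, p a = 1)
    (hαpos : ∀ i, 0 < α i) (hα1 : ∑ i, α i = 1)
    (hαeig : (∑ a, p a • letterMat δ a).mulVec α = α) :
    ∀ m : ℕ, ∀ K : Finset (Fin n), K.Nonempty →
      ((Vset α).filter (fun x => wA α K < x)).card ≤ m →
      ∃ w : List (Fin k), (∀ q, act δ w q ∈ K) ∧ w.length ≤ m * (n - 1) := by
  classical
  intro m
  induction m with
  | zero =>
    intro K hK hcard
    by_cases hKu : K = Finset.univ
    · refine ⟨[], fun q => ?_, by simp⟩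
      rw [hKu]
      exact Finset.mem_univ _
    · exfalso
      obtain ⟨v, _, hv⟩ := extend δ p α hsc hsync hp hp1 hαpos hα1 hαeig K hK hKu
      have hmem : wA α (preim δ v K) ∈ (Vset α).filter (fun x => wA α K < x) := by
        rw [Finset.mem_filter]
        exact ⟨Finset.mem_image_of_mem _ (Finset.mem_univ _), hv⟩
      have := Finset.card_pos.2 ⟨_, hmem⟩
      omega
  | succ m ih =>
    intro K hK hcard
    by_cases hKu : K = Finset.univ
    · refine ⟨[], fun q => ?_, by simp⟩
      rw [hKu]
      exact Finset.mem_univ _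
    · obtain ⟨v, hvlen, hv⟩ := extend δ p α hsc hsync hp hp1 hαpos hα1 hαeig K hK hKu
      set Kv := preim δ v K with hKv
      have hKvne : Kv.Nonempty := by
        rw [Finset.nonempty_iff_ne_empty]
        intro he
        have h0 : wA α Kv = 0 := by rw [he, wA, Finset.sum_empty]
        have := wA_pos hαpos hK
        linarith
      have hmemv : wA α Kv ∈ (Vset α).filter (fun x => wA α K < x) := by
        rw [Finset.mem_filter]
        exact ⟨Finset.mem_image_of_mem _ (Finset.mem_univ _), hv⟩
      have hsubv : (Vset α).filter (fun x => wA α Kv < x)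
          ⊆ ((Vset α).filter (fun x => wA α K < x)).erase (wA α Kv) := by
        intro x hx
        rw [Finset.mem_filter] at hx
        rw [Finset.mem_erase, Finset.mem_filter]
        exact ⟨ne_of_gt hx.2, hx.1, lt_trans hv hx.2⟩
      have hcard' : ((Vset α).filter (fun x => wA α Kv < x)).card ≤ m := by
        have h1 := Finset.card_le_card hsubv
        have h2 := Finset.card_erase_of_mem hmemv
        have h3 := Finset.card_pos.2 ⟨_, hmemv⟩
        omega
      obtain ⟨w', hw', hw'len⟩ := ih Kv hKvne hcard'
      refine ⟨w' ++ v, fun q => ?_, ?_⟩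
      · rw [act_append]
        have := hw' q
        rw [hKv, mem_preim] at this
        exact this
      · rw [List.length_append]
        have : (m + 1) * (n - 1) = m * (n - 1) + (n - 1) := by ring
        omega

end Stmt10Aux

theorem stmt10 {n k : ℕ} (hn : 2 ≤ n) (δ : Fin n → Fin k → Fin n)
    (hsc : ∀ s q : Fin n, ∃ w : List (Fin k), act δ w s = q)
    (hsync : ∃ w, IsReset δ w)
    (p : Fin k → ℝ) (hp : ∀ a, 0 < p a) (hp1 : ∑ a, p a = 1)
    (α : Fin n → ℝ) (hαpos : ∀ i, 0 < α i) (hα1 : ∑ i, α i = 1)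
    (hαeig : (∑ a, p a • letterMat δ a).mulVec α = α)
    (c : ℕ) (hc : 0 < c)
    (heq : ∃ T : Finset (Fin n), n - c ≤ T.card ∧
      ∀ i ∈ T, ∀ j ∈ T, α i = α j)
    (r : ℕ)
    (hr : IsLeast {t : ℕ | ∃ w : List (Fin k), IsReset δ w ∧ w.length = t} r) :
    r ≤ 2 ^ c * (n - c + 1) * (n - 1) := by
  classical
  obtain ⟨T, hTcard, hTeq⟩ := heq
  set q0 : Fin n := ⟨0, by omega⟩ with hq0
  obtain ⟨w, hw, hwlen⟩ := Stmt10Aux.chain δ p α hsc hsync hp hp1 hαpos hα1 hαeig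
    (Stmt10Aux.Vset α).card {q0} ⟨q0, Finset.mem_singleton_self q0⟩
    (Finset.card_filter_le _ _)
  have hreset : IsReset δ w := by
    intro a b
    have ha := hw a
    have hb := hw b
    rw [Finset.mem_singleton] at ha hb
    rw [ha, hb]
  have hrle : r ≤ w.length := hr.2 ⟨w, hreset, rfl⟩
  have hV := Stmt10Aux.card_V (c := c) α T hTcard hTeq
  calc r ≤ w.length := hrle
    _ ≤ (Stmt10Aux.Vset α).card * (n - 1) := hwlen
    _ ≤ (2 ^ c * (n - c + 1)) * (n - 1) := Nat.mul_le_mul_right _ hV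
    _ = 2 ^ c * (n - c + 1) * (n - 1) := by ring
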